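/- Let X be a real Banach space. Suppose that for every ε > 0 there exists δ > 0 such that for every x ∈ S(X) there exists a norm-attaining f ∈ S(X*) with d*₁(f, δ) < ε/4 and D⁻¹(f) ⊆ B(x, ε/4). Then for every ε > 0 there exists α > 0 such that for every x ∈ S(X) there exists f ∈ S(X*) with S(B(X), f, α) ⊆ B(x, ε) (i.e., every x ∈ S(X) is uniformly semidenting). -/

import Mathlib

open NormedSpace

set_option maxHeartbeats 1000000 in
/-- Condition (e*) implies that every unit vector of `X` is uniformly semidenting. -/
theorem stmt_19 {X : Type*} [NormedAddCommGroup X] [NormedSpace ℝ X] [CompleteSpace X]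
    (h : ∀ ε : ℝ, 0 < ε → ∃ δ : ℝ, 0 < δ ∧
      ∀ x : X, ‖x‖ = 1 → ∃ f : StrongDual ℝ X, ‖f‖ = 1 ∧ (∃ y : X, ‖y‖ = 1 ∧ f y = 1) ∧
        sSup {r : ℝ | ∃ lam : ℝ, ∃ g : StrongDual ℝ X, 0 < lam ∧ lam < δ ∧ ‖g‖ ≤ 1 ∧
          r = (‖f + lam • g‖ + ‖f - lam • g‖ - 2) / lam} < ε / 4 ∧
        {y : X | ‖y‖ = 1 ∧ f y = 1} ⊆ Metric.ball x (ε / 4)) :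
    ∀ ε : ℝ, 0 < ε → ∃ α : ℝ, 0 < α ∧
      ∀ x : X, ‖x‖ = 1 → ∃ f : StrongDual ℝ X, ‖f‖ = 1 ∧
        {y : X | ‖y‖ ≤ 1 ∧ 1 - α < f y} ⊆ Metric.ball x ε := by
  intro ε hε
  obtain ⟨δ, hδ, hmain⟩ := h ε hε
  refine ⟨ε * δ / 16, by positivity, ?_⟩
  intro x hx
  obtain ⟨f, hf, ⟨z, hz1, hzf⟩, hsup, hsub⟩ := hmain x hx
  refine ⟨f, hf, ?_⟩
  rintro y ⟨hy1, hy2⟩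
  have hzx : dist z x < ε / 4 := Metric.mem_ball.mp (hsub ⟨hz1, hzf⟩)
  have key : ‖y - z‖ < 3 * ε / 8 := by
    by_cases hyz : y = z
    · rw [hyz, sub_self, norm_zero]; linarith
    · obtain ⟨g, hg, hgu⟩ := exists_dual_vector ℝ (y - z) (norm_ne_zero_iff.mpr (sub_ne_zero.mpr hyz))
      obtain ⟨lam, hlam0, hlamδ, hlamdef⟩ : ∃ lam : ℝ, 0 < lam ∧ lam < δ ∧ lam = δ / 2 :=
        ⟨δ / 2, by positivity, by linarith, rfl⟩
      have hgu' : g y - g z = ‖y - z‖ := by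
        have := hgu
        rw [map_sub] at this
        exact_mod_cast this
      have hbdd : BddAbove {r : ℝ | ∃ lam : ℝ, ∃ g : StrongDual ℝ X, 0 < lam ∧ lam < δ ∧ ‖g‖ ≤ 1 ∧
          r = (‖f + lam • g‖ + ‖f - lam • g‖ - 2) / lam} := by
        refine ⟨2, ?_⟩
        rintro r ⟨l, g', hl0, _, hg', rfl⟩
        rw [div_le_iff₀ hl0]
        have h1 : ‖f + l • g'‖ ≤ 1 + l := by
          calc ‖f + l • g'‖ ≤ ‖f‖ + ‖l • g'‖ := norm_add_le _ _
            _ ≤ 1 + l := by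
              rw [hf, norm_smul, Real.norm_eq_abs, abs_of_pos hl0]
              nlinarith
        have h2 : ‖f - l • g'‖ ≤ 1 + l := by
          calc ‖f - l • g'‖ ≤ ‖f‖ + ‖l • g'‖ := norm_sub_le _ _
            _ ≤ 1 + l := by
              rw [hf, norm_smul, Real.norm_eq_abs, abs_of_pos hl0]
              nlinarith
        linarith
      have hmem : (‖f + lam • g‖ + ‖f - lam • g‖ - 2) / lam ∈
          {r : ℝ | ∃ lam : ℝ, ∃ g : StrongDual ℝ X, 0 < lam ∧ lam < δ ∧ ‖g‖ ≤ 1 ∧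
            r = (‖f + lam • g‖ + ‖f - lam • g‖ - 2) / lam} :=
        ⟨lam, g, hlam0, hlamδ, hg.le, rfl⟩
      have hle : (‖f + lam • g‖ + ‖f - lam • g‖ - 2) / lam < ε / 4 :=
        lt_of_le_of_lt (le_csSup hbdd hmem) hsup
      have hA : f y + lam * g y ≤ ‖f + lam • g‖ := by
        have h1 : (f + lam • g) y ≤ ‖(f + lam • g) y‖ := le_abs_self _
        have h2 : ‖(f + lam • g) y‖ ≤ ‖f + lam • g‖ * ‖y‖ := (f + lam • g).le_opNorm y
        have h3 : ‖f + lam • g‖ * ‖y‖ ≤ ‖f + lam • g‖ :=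
          mul_le_of_le_one_right (norm_nonneg _) hy1
        have h4 : (f + lam • g) y = f y + lam * g y := by
          simp [ContinuousLinearMap.add_apply]
        linarith
      have hB : 1 - lam * g z ≤ ‖f - lam • g‖ := by
        have h1 : (f - lam • g) z ≤ ‖(f - lam • g) z‖ := le_abs_self _
        have h2 : ‖(f - lam • g) z‖ ≤ ‖f - lam • g‖ * ‖z‖ := (f - lam • g).le_opNorm z
        have h3 : (f - lam • g) z = 1 - lam * g z := by
          simp [ContinuousLinearMap.sub_apply, hzf]
        rw [hz1, mul_one] at h2
        linarith
      have hnum : lam * ‖y - z‖ - ε * δ / 16 <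
          ‖f + lam • g‖ + ‖f - lam • g‖ - 2 := by
        have : lam * (g y - g z) = lam * ‖y - z‖ := by rw [hgu']
        nlinarith
      rw [div_lt_iff₀ hlam0] at hle
      have h5 : lam * ‖y - z‖ < ε / 4 * lam + ε * δ / 16 := by linarith
      have h6 : δ * ‖y - z‖ < 3 * (ε * δ) / 8 := by
        rw [hlamdef] at h5
        nlinarith
      nlinarith [norm_nonneg (y - z)]
  have h6 : dist y x ≤ dist y z + dist z x := dist_triangle y z x
  have h7 : dist y z = ‖y - z‖ := dist_eq_norm y z
  rw [Metric.mem_ball]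
  linarith
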